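/- Let G be a profinite-C group and A an abelian closed normal subgroup of G. Then for every closed subgroup B of A there exists a closed subgroup L of A, normal in G, such that A = B × L (internally: A = BL and B ∩ L = 1). -/

import Mathlib

open Pointwise

/-- In a profinite-C group `G`, if `A` is an abelian closed normal subgroup and `B` a
closed subgroup of `A`, then `A = B × L` for some closed subgroup `L` of `A` normal
in `G`. -/
theorem stmt10 {G : Type*} [Group G] [TopologicalSpace G] [IsTopologicalGroup G]
    [CompactSpace G] [T2Space G] [TotallyDisconnectedSpace G]
    (hC : ∀ H : Subgroup G, IsClosed (H : Set G) → ∃ K : Subgroup G,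
      IsClosed (K : Set G) ∧ (H : Set G) * (K : Set G) = Set.univ ∧ H ⊓ K = ⊥)
    (A : Subgroup G) [A.Normal] (hAc : IsClosed (A : Set G))
    (hAab : ∀ x y : G, x ∈ A → y ∈ A → x * y = y * x)
    (B : Subgroup G) (hBA : B ≤ A) (hBc : IsClosed (B : Set G)) :
    ∃ L : Subgroup G, L ≤ A ∧ IsClosed (L : Set G) ∧ L.Normal ∧
      (B : Set G) * (L : Set G) = (A : Set G) ∧ B ⊓ L = ⊥ := by
  obtain ⟨K, hKc, hBK, hBKbot⟩ := hC B hBc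
  refine ⟨A ⊓ K, inf_le_left, hAc.inter hKc, ?_, ?_, ?_⟩
  · constructor
    intro x hx g
    obtain ⟨hxA, hxK⟩ := hx
    -- write g = b * k
    have hg : g ∈ (B : Set G) * (K : Set G) := by rw [hBK]; trivial
    obtain ⟨b, hb, k, hk, rfl⟩ := hg
    have hkxk : k * x * k⁻¹ ∈ A := ‹A.Normal›.conj_mem x hxA k
    have hkxkK : k * x * k⁻¹ ∈ K := K.mul_mem (K.mul_mem hk hxK) (K.inv_mem hk)
    have hbA : b ∈ A := hBA hb
    have hcomm : b * (k * x * k⁻¹) = (k * x * k⁻¹) * b := hAab _ _ hbA hkxk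
    have : (b * k) * x * (b * k)⁻¹ = k * x * k⁻¹ := by
      rw [mul_inv_rev]
      calc b * k * x * (k⁻¹ * b⁻¹) = b * (k * x * k⁻¹) * b⁻¹ := by group
        _ = (k * x * k⁻¹) * b * b⁻¹ := by rw [hcomm]
        _ = k * x * k⁻¹ := by group
    rw [this]
    exact ⟨hkxk, hkxkK⟩
  · ext a
    constructor
    · rintro ⟨b, hb, l, hl, rfl⟩
      exact A.mul_mem (hBA hb) hl.1
    · intro ha
      have : a ∈ (B : Set G) * (K : Set G) := by rw [hBK]; trivial
      obtain ⟨b, hb, k, hk, rfl⟩ := this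
      have hbA : b ∈ A := hBA hb
      have hkA : k ∈ A := by
        have : k = b⁻¹ * (b * k) := by group
        rw [this]; exact A.mul_mem (A.inv_mem hbA) ha
      exact ⟨b, hb, k, ⟨hkA, hk⟩, rfl⟩
  · have : B ⊓ (A ⊓ K) ≤ B ⊓ K := le_inf inf_le_left (le_trans inf_le_right inf_le_right)
    exact le_bot_iff.mp (hBKbot ▸ this)
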